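/- arXiv:2605.27943 — 3 statements merged into one kernel-verified Lean document; each statement's English description precedes it below -/
import Mathlib

section
/- Let ℓ ≥ 2 be an integer, let G ∈ H_ℓ, and let H be an induced theta subgraph of G all of whose cycles are even. Then either all three ears of H have length ℓ, or exactly one ear of H has length 1. -/
open SimpleGraph

variable {V : Type*}

namespace SimpleGraph

/-- The internal vertices of a walk, as a list. -/
def Walk.interior {G : SimpleGraph V} {u v : V} (p : G.Walk u v) : List V :=
  p.support.tail.dropLast

/-- A hole: an induced cycle of length at least `4`. -/
def IsHole (G : SimpleGraph V) {v : V} (C : G.Walk v v) : Prop :=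
  C.IsCycle ∧ 4 ≤ C.length ∧
    ∀ x ∈ C.support, ∀ y ∈ C.support, G.Adj x y → s(x, y) ∈ C.edges

/-- An even hole: a hole of even length. -/
def IsEvenHole (G : SimpleGraph V) {v : V} (C : G.Walk v v) : Prop :=
  G.IsHole C ∧ Even C.length

/-- `G ∈ H_ℓ`: `G` has girth `2ℓ` and no even hole of length greater than `2ℓ`. -/
def InFamilyH (G : SimpleGraph V) (ℓ : ℕ) : Prop :=
  G.girth = 2 * ℓ ∧
    ∀ (v : V) (C : G.Walk v v), G.IsHole C → Even C.length → C.length ≤ 2 * ℓ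

/-- `G` has a `K1`-cut: a vertex whose deletion disconnects `G`. -/
def HasK1Cut (G : SimpleGraph V) : Prop :=
  ∃ x : V, ¬ (G.induce {y : V | y ≠ x}).Connected

/-- `G` has a `K2`-cut: a pair of adjacent vertices whose deletion disconnects `G`. -/
def HasK2Cut (G : SimpleGraph V) : Prop :=
  ∃ x y : V, G.Adj x y ∧ ¬ (G.induce {z : V | z ≠ x ∧ z ≠ y}).Connected

/-- `P` is an `(s,t)`-jump over the hole `C`: an induced path with both ends on `C`
whose internal vertices avoid `C`. -/
def IsJump (G : SimpleGraph V) {v s t : V} (C : G.Walk v v) (P : G.Walk s t) : Prop :=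
  P.IsPath ∧
    (∀ x ∈ P.support, ∀ y ∈ P.support, G.Adj x y → s(x, y) ∈ P.edges) ∧
    s ∈ C.support ∧ t ∈ C.support ∧
    ∀ x ∈ P.interior, x ∉ C.support

/-- `P` is a short `(s,t)`-jump over `C`: a jump with non-adjacent ends such that no vertex
of `C` other than `s, t` has a neighbour among the internal vertices of `P`. -/
def IsShortJump (G : SimpleGraph V) {v s t : V} (C : G.Walk v v) (P : G.Walk s t) : Prop :=
  G.IsJump C P ∧ ¬ G.Adj s t ∧
    ∀ x ∈ C.support, x ≠ s → x ≠ t → ∀ y ∈ P.interior, ¬ G.Adj x y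

/-- A short `(s,t)`-jump `P` over an even hole `C` is of type-o if the cycle formed by `P`
together with an `(s,t)`-arc of `C` is odd.  (For an even hole both arcs give the same parity.) -/
def JumpTypeO (G : SimpleGraph V) {v s t : V} (C : G.Walk v v) (P : G.Walk s t) : Prop :=
  ∃ Q : G.Walk s t, Q.IsPath ∧ (∀ e ∈ Q.edges, e ∈ C.edges) ∧ Odd (P.length + Q.length)

/-- A short `(s,t)`-jump `P` over an even hole `C` is of type-e if the cycle formed by `P`
together with an `(s,t)`-arc of `C` is even. -/
def JumpTypeE (G : SimpleGraph V) {v s t : V} (C : G.Walk v v) (P : G.Walk s t) : Prop :=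
  ∃ Q : G.Walk s t, Q.IsPath ∧ (∀ e ∈ Q.edges, e ∈ C.edges) ∧ Even (P.length + Q.length)

/-- `P` is a local `(s,t)`-jump over `C` across the single vertex `c`:
`s, c, t` are consecutive on `C`, the ends `s, t` are non-adjacent, `c` has a neighbour among the
internal vertices of `P`, and no other vertex of `C` has a neighbour among them. -/
def IsLocalJumpAcrossOne (G : SimpleGraph V) {v s t : V} (C : G.Walk v v) (P : G.Walk s t)
    (c : V) : Prop :=
  G.IsJump C P ∧ ¬ G.Adj s t ∧ s(s, c) ∈ C.edges ∧ s(c, t) ∈ C.edges ∧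
    (∃ y ∈ P.interior, G.Adj c y) ∧
    ∀ x ∈ C.support, x ≠ s → x ≠ c → x ≠ t → ∀ y ∈ P.interior, ¬ G.Adj x y

/-- The vertices `a, b, c, d` appear on the cycle `C` in this cyclic order. -/
def InCyclicOrder {G : SimpleGraph V} {v : V} (C : G.Walk v v) (a b c d : V) : Prop :=
  ∃ l1 l2 l3 l4 : List V,
    C.support.tail ~r (a :: (l1 ++ b :: (l2 ++ c :: (l3 ++ d :: l4))))

/-- Two jumps over `C`, with ends `u1, v1` and `u2, v2` respectively, are crossing if their
ends are four distinct vertices interleaving on `C`. -/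
def Crossing {G : SimpleGraph V} {v : V} (C : G.Walk v v) (u1 v1 u2 v2 : V) : Prop :=
  [u1, v1, u2, v2].Nodup ∧
    (InCyclicOrder C u1 u2 v1 v2 ∨ InCyclicOrder C u1 v2 v1 u2)

/-- Two jumps over `C` are parallel if they are not crossing. -/
def ParallelJumps {G : SimpleGraph V} {v : V} (C : G.Walk v v) (u1 v1 u2 v2 : V) : Prop :=
  ¬ Crossing C u1 v1 u2 v2

/-- The distance between `s` and `t` along the cycle `C`. -/
noncomputable def cycleDist {G : SimpleGraph V} {v : V} (C : G.Walk v v) (s t : V) : ℕ :=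
  (SimpleGraph.fromEdgeSet {e : Sym2 V | e ∈ C.edges}).dist s t

/-- `P1, P2, P3` form an induced theta subgraph of `G`:  three pairwise distinct,
pairwise internally disjoint induced-union paths joining two distinct vertices `a, b`. -/
def IsInducedTheta (G : SimpleGraph V) {a b : V} (P1 P2 P3 : G.Walk a b) : Prop :=
  a ≠ b ∧ P1.IsPath ∧ P2.IsPath ∧ P3.IsPath ∧
  P1 ≠ P2 ∧ P1 ≠ P3 ∧ P2 ≠ P3 ∧
  (∀ x ∈ P1.interior, x ∉ P2.interior) ∧
  (∀ x ∈ P1.interior, x ∉ P3.interior) ∧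
  (∀ x ∈ P2.interior, x ∉ P3.interior) ∧
  (∀ x, (x ∈ P1.support ∨ x ∈ P2.support ∨ x ∈ P3.support) →
    ∀ y, (y ∈ P1.support ∨ y ∈ P2.support ∨ y ∈ P3.support) →
      G.Adj x y → (s(x, y) ∈ P1.edges ∨ s(x, y) ∈ P2.edges ∨ s(x, y) ∈ P3.edges))

end SimpleGraph

namespace SimpleGraph

variable {G : SimpleGraph V} {a b : V}

lemma walk_length_one_eq {p q : G.Walk a b} (hp : p.length = 1) (hq : q.length = 1) : p = q := by
  cases p with
  | nil => simp at hp
  | cons h p' =>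
    cases p' with
    | nil =>
      cases q with
      | nil => simp at hq
      | cons h' q' =>
        cases q' with
        | nil => rfl
        | cons h'' q'' => simp [Walk.length_cons] at hq
    | cons h'' p'' => simp [Walk.length_cons] at hp

lemma length_eq_one_of_edge_mem {p : G.Walk a b} (hp : p.IsPath) (hab : a ≠ b)
    (he : s(a, b) ∈ p.edges) : p.length = 1 := by
  induction p with
  | nil => simp at he
  | @cons u c w h p' ih =>
    rw [Walk.edges_cons, List.mem_cons] at he
    rcases he with he | he
    · rw [Sym2.eq_iff] at he
      rcases he with ⟨-, rfl⟩ | ⟨rfl, rfl⟩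
      · have : p' = Walk.nil := Walk.isPath_iff_eq_nil.mp (hp.of_cons)
        simp [this]
      · exact absurd rfl hab
    · exact absurd (p'.fst_mem_support_of_mem_edges he) ((Walk.cons_isPath_iff h p').mp hp).2

lemma support_eq_interior (p : G.Walk a b) (h : 1 ≤ p.length) :
    p.support = a :: (p.interior ++ [b]) := by
  have h1 : p.support = a :: p.support.tail := p.support_eq_cons
  have h2 : p.support.tail ≠ [] := by
    intro hc
    have := p.length_support
    rw [h1, hc] at this
    simp only [List.length_cons, List.length_nil] at this
    omega
  have h3 : p.support.tail = p.support.tail.dropLast ++ [p.support.tail.getLast h2] :=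
    (List.dropLast_append_getLast h2).symm
  have h4 : p.support.tail.getLast h2 = b := by
    rw [List.getLast_tail]
    exact p.getLast_support
  conv_lhs => rw [h1, h3]
  rw [Walk.interior, h4]

lemma mem_support_iff_interior {p : G.Walk a b} (h : 1 ≤ p.length) {x : V} :
    x ∈ p.support ↔ x = a ∨ x ∈ p.interior ∨ x = b := by
  rw [support_eq_interior p h]; simp [or_assoc]

lemma interior_ne_ends {p : G.Walk a b} (hp : p.IsPath) (h : 1 ≤ p.length) {x : V}
    (hx : x ∈ p.interior) : x ≠ a ∧ x ≠ b := by
  have hn := hp.support_nodup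
  rw [support_eq_interior p h] at hn
  simp only [List.nodup_cons, List.mem_append, List.nodup_append, List.mem_singleton,
    List.nodup_singleton, List.disjoint_singleton, not_or] at hn
  constructor
  · rintro rfl; exact hn.1.1 hx
  · rintro rfl; simpa using hn.2.2.2 _ hx

lemma interior_nodup {p : G.Walk a b} (hp : p.IsPath) : p.interior.Nodup :=
  (List.dropLast_sublist _).nodup hp.support_nodup.tail

lemma edge_mem_interior {w : G.Walk a b} (hw : w.IsPath) (h1 : 1 ≤ w.length)
    (hnadj : ¬ G.Adj a b) {x y : V} (he : s(x, y) ∈ w.edges) :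
    x ∈ w.interior ∨ y ∈ w.interior := by
  by_contra hc
  push_neg at hc
  have hx := (mem_support_iff_interior h1).mp (w.fst_mem_support_of_mem_edges he)
  have hy := (mem_support_iff_interior h1).mp (w.snd_mem_support_of_mem_edges he)
  have hadj := w.adj_of_mem_edges he
  rcases hx with rfl | hx | rfl <;> rcases hy with rfl | hy | rfl <;>
    first
      | exact hadj.ne rfl
      | exact hnadj hadj
      | exact hnadj hadj.symm
      | exact hc.1 hx
      | exact hc.2 hy

lemma key_pair (G : SimpleGraph V) (ℓ : ℕ) (hG : G.InFamilyH ℓ)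
    {a b : V} (p q r : G.Walk a b) (hab : a ≠ b)
    (hp : p.IsPath) (hq : q.IsPath) (hr : r.IsPath)
    (hpq : ∀ x ∈ p.interior, x ∉ q.interior)
    (hpr : ∀ x ∈ p.interior, x ∉ r.interior)
    (hqr : ∀ x ∈ q.interior, x ∉ r.interior)
    (hnadj : ¬ G.Adj a b)
    (h2p : 2 ≤ p.length) (h2q : 2 ≤ q.length) (h2r : 2 ≤ r.length)
    (hInd : ∀ x, (x ∈ p.support ∨ x ∈ q.support ∨ x ∈ r.support) →
      ∀ y, (y ∈ p.support ∨ y ∈ q.support ∨ y ∈ r.support) →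
        G.Adj x y → (s(x, y) ∈ p.edges ∨ s(x, y) ∈ q.edges ∨ s(x, y) ∈ r.edges))
    (heven : Even (p.length + q.length)) :
    p.length + q.length = 2 * ℓ := by
  have h1p : 1 ≤ p.length := by omega
  have h1q : 1 ≤ q.length := by omega
  have h1r : 1 ≤ r.length := by omega
  set C : G.Walk a a := p.append q.reverse with hC
  have hlenC : C.length = p.length + q.length := by
    simp [hC, Walk.length_append, Walk.length_reverse]
  have hmemC : ∀ x, x ∈ C.support ↔ x ∈ p.support ∨ x ∈ q.support := by
    intro x
    rw [hC, Walk.mem_support_append_iff, Walk.support_reverse, List.mem_reverse]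
  -- interior vertices of r avoid C
  have hrC : ∀ x ∈ r.interior, x ∉ C.support := by
    intro x hx hxC
    obtain ⟨hxa, hxb⟩ := interior_ne_ends hr h1r hx
    rcases (hmemC x).mp hxC with hxp | hxq
    · rcases (mem_support_iff_interior h1p).mp hxp with rfl | hxi | rfl
      · exact hxa rfl
      · exact hpr x hxi hx
      · exact hxb rfl
    · rcases (mem_support_iff_interior h1q).mp hxq with rfl | hxi | rfl
      · exact hxa rfl
      · exact hqr x hxi hx
      · exact hxb rfl
  -- p and q share no edges
  have hdisjE : ∀ e ∈ p.edges, e ∉ q.edges := by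
    intro e hep heq
    induction e with
    | h x y =>
      rcases edge_mem_interior hp h1p hnadj hep with hxi | hyi
      · rcases (mem_support_iff_interior h1q).mp (q.fst_mem_support_of_mem_edges heq) with
          rfl | hxi' | rfl
        · exact (interior_ne_ends hp h1p hxi).1 rfl
        · exact hpq x hxi hxi'
        · exact (interior_ne_ends hp h1p hxi).2 rfl
      · rcases (mem_support_iff_interior h1q).mp (q.snd_mem_support_of_mem_edges heq) with
          rfl | hyi' | rfl
        · exact (interior_ne_ends hp h1p hyi).1 rfl
        · exact hpq y hyi hyi'
        · exact (interior_ne_ends hp h1p hyi).2 rfl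
  have hCsup : C.support = a :: (p.interior ++ [b] ++ (q.interior.reverse ++ [a])) := by
    rw [hC, Walk.support_append, Walk.support_reverse,
      support_eq_interior p h1p, support_eq_interior q h1q]
    simp
  have hCtail : C.support.tail = p.interior ++ [b] ++ (q.interior.reverse ++ [a]) := by
    rw [hCsup]; rfl
  have hnodup : C.support.tail.Nodup := by
    rw [hCtail]
    have hpn := interior_nodup hp
    have hqn := interior_nodup hq
    rw [List.append_assoc]
    refine hpn.append ?_ ?_
    · simp only [List.singleton_append, List.nodup_cons, List.mem_append, List.mem_reverse,
        List.mem_singleton, not_or]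
      refine ⟨⟨fun h => (interior_ne_ends hq h1q h).2 rfl, Ne.symm hab⟩, ?_⟩
      refine (List.nodup_reverse.mpr hqn).append (List.nodup_singleton a) ?_
      intro x hx hx'
      rw [List.mem_singleton] at hx'
      subst hx'
      exact (interior_ne_ends hq h1q (List.mem_reverse.mp hx)).1 rfl
    · intro x hx hx'
      simp only [List.singleton_append, List.mem_cons, List.mem_append, List.mem_reverse,
        List.mem_singleton, List.not_mem_nil, or_false] at hx'
      rcases hx' with rfl | hx' | rfl
      · exact (interior_ne_ends hp h1p hx).2 rfl
      · exact hpq x hx hx'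
      · exact (interior_ne_ends hp h1p hx).1 rfl
  have hCtrail : C.IsTrail := by
    rw [Walk.isTrail_def, hC, Walk.edges_append, Walk.edges_reverse]
    exact (hp.isTrail.edges_nodup.append (List.nodup_reverse.mpr hq.isTrail.edges_nodup)) (by
      intro e hep heq
      exact hdisjE e hep (List.mem_reverse.mp heq))
  have hCne : C ≠ Walk.nil := by
    intro h
    have : C.length = 0 := by rw [h]; rfl
    omega
  have hCycle : C.IsCycle := ⟨⟨hCtrail, hCne⟩, hnodup⟩
  have hHole : G.IsHole C := by
    refine ⟨hCycle, by omega, ?_⟩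
    intro x hx y hy hadj
    have hx' := (hmemC x).mp hx
    have hy' := (hmemC y).mp hy
    have := hInd x (by tauto) y (by tauto) hadj
    have hCedges : C.edges = p.edges ++ q.edges.reverse := by
      rw [hC, Walk.edges_append, Walk.edges_reverse]
    rcases this with h | h | h
    · rw [hCedges]; exact List.mem_append_left _ h
    · rw [hCedges]; exact List.mem_append_right _ (List.mem_reverse.mpr h)
    · rcases edge_mem_interior hr h1r hnadj h with hi | hi
      · exact absurd hx (hrC x hi)
      · exact absurd hy (hrC y hi)
  have hupper : C.length ≤ 2 * ℓ := hG.2 a C hHole (by rwa [hlenC])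
  have hlower : 2 * ℓ ≤ C.length := by
    have hegirth : G.egirth ≤ C.length := le_egirth.mp le_rfl a C hCycle
    have hne : G.egirth ≠ ⊤ := by
      intro h
      rw [h] at hegirth
      simp at hegirth
    have h3 : (G.girth : ℕ∞) ≤ (C.length : ℕ∞) := by
      rw [girth, ENat.coe_toNat hne]
      exact hegirth
    rw [hG.1] at h3
    exact_mod_cast h3
  omega

end SimpleGraph

/-- in an induced theta subgraph of a graph in `H_ℓ` all of whose cycles are
even, either all three ears have length `ℓ`, or exactly one ear has length `1`. -/
theorem theta_all_cycles_even {V : Type*} [Fintype V] (G : SimpleGraph V)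
    (ℓ : ℕ) (hℓ : 2 ≤ ℓ) (hG : G.InFamilyH ℓ)
    {a b : V} (P1 P2 P3 : G.Walk a b) (hTheta : G.IsInducedTheta P1 P2 P3)
    (h12 : Even (P1.length + P2.length))
    (h13 : Even (P1.length + P3.length))
    (h23 : Even (P2.length + P3.length)) :
    (P1.length = ℓ ∧ P2.length = ℓ ∧ P3.length = ℓ) ∨
    (P1.length = 1 ∧ P2.length ≠ 1 ∧ P3.length ≠ 1) ∨
    (P2.length = 1 ∧ P1.length ≠ 1 ∧ P3.length ≠ 1) ∨
    (P3.length = 1 ∧ P1.length ≠ 1 ∧ P2.length ≠ 1) := by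
  obtain ⟨hab, hP1, hP2, hP3, h12ne, h13ne, h23ne, hd12, hd13, hd23, hInd⟩ := hTheta
  have hn1 : P1.length ≠ 0 := fun h => hab (Walk.eq_of_length_eq_zero h)
  have hn2 : P2.length ≠ 0 := fun h => hab (Walk.eq_of_length_eq_zero h)
  have hn3 : P3.length ≠ 0 := fun h => hab (Walk.eq_of_length_eq_zero h)
  by_cases hl1 : P1.length = 1
  · exact Or.inr (Or.inl ⟨hl1, fun h => h12ne (walk_length_one_eq hl1 h),
      fun h => h13ne (walk_length_one_eq hl1 h)⟩)
  by_cases hl2 : P2.length = 1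
  · exact Or.inr (Or.inr (Or.inl ⟨hl2, fun h => h12ne (walk_length_one_eq h hl2),
      fun h => h23ne (walk_length_one_eq hl2 h)⟩))
  by_cases hl3 : P3.length = 1
  · exact Or.inr (Or.inr (Or.inr ⟨hl3, fun h => h13ne (walk_length_one_eq h hl3),
      fun h => h23ne (walk_length_one_eq h hl3)⟩))
  left
  have h2p : 2 ≤ P1.length := by omega
  have h2q : 2 ≤ P2.length := by omega
  have h2r : 2 ≤ P3.length := by omega
  have hnadj : ¬ G.Adj a b := by
    intro hadj
    rcases hInd a (Or.inl P1.start_mem_support) b (Or.inl P1.end_mem_support) hadj with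
      h | h | h
    · exact hl1 (length_eq_one_of_edge_mem hP1 hab h)
    · exact hl2 (length_eq_one_of_edge_mem hP2 hab h)
    · exact hl3 (length_eq_one_of_edge_mem hP3 hab h)
  have s12 := key_pair G ℓ hG P1 P2 P3 hab hP1 hP2 hP3 hd12 hd13 hd23 hnadj h2p h2q h2r hInd h12
  have perm132 : ∀ {A B C : Prop}, (A ∨ C ∨ B) → (A ∨ B ∨ C) := fun h => h.imp id Or.symm
  have perm231 : ∀ {A B C : Prop}, (B ∨ C ∨ A) → (A ∨ B ∨ C) := fun h =>
    h.elim (fun h' => Or.inr (Or.inl h'))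
      (fun h' => h'.elim (fun h'' => Or.inr (Or.inr h'')) Or.inl)
  have perm312 : ∀ {A B C : Prop}, (A ∨ B ∨ C) → (B ∨ C ∨ A) := fun h =>
    h.elim (fun h' => Or.inr (Or.inr h'))
      (fun h' => h'.elim Or.inl (fun h'' => Or.inr (Or.inl h'')))
  have s13 := key_pair G ℓ hG P1 P3 P2 hab hP1 hP3 hP2 hd13 hd12
    (fun x hx hx' => hd23 x hx' hx) hnadj h2p h2r h2q
    (fun x hx y hy hxy => perm132 (hInd x (perm132 hx) y (perm132 hy) hxy)) h13
  have s23 := key_pair G ℓ hG P2 P3 P1 hab hP2 hP3 hP1 hd23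
    (fun x hx hx' => hd12 x hx' hx) (fun x hx hx' => hd13 x hx' hx) hnadj h2q h2r h2p
    (fun x hx y hy hxy => perm312 (hInd x (perm231 hx) y (perm231 hy) hxy)) h23
  refine ⟨by omega, by omega, by omega⟩
end

section
/- Let ℓ ≥ 2 be an integer, let G ∈ H_ℓ, and let H be an induced theta subgraph of G some cycle of which is odd. Let P and P′ be the two ears of H that are shared by cycles of H having different parity. Then the ear of H shared by the two odd cycles of H has length 1 or length greater than max{ℓ, |P|, |P′|}. -/
open SimpleGraph

variable {V : Type*}

section Aux

variable {G : SimpleGraph V}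

/-- A path from `a` to `b` containing the edge `s(a,b)` has length 1. -/
lemma aux_length_one_of_edge_mem {a b : V} {P : G.Walk a b} (hP : P.IsPath)
    (h : s(a, b) ∈ P.edges) : P.length = 1 := by
  cases P with
  | nil => simp at h
  | @cons _ c _ hadj q =>
    rw [SimpleGraph.Walk.cons_isPath_iff] at hP
    rw [SimpleGraph.Walk.edges_cons, List.mem_cons] at h
    rcases h with h | h
    · rw [Sym2.eq_iff] at h
      rcases h with ⟨-, rfl⟩ | ⟨rfl, rfl⟩
      · cases q with
        | nil => rfl
        | cons h' q' =>
          exfalso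
          have hnd := hP.1.support_nodup
          rw [SimpleGraph.Walk.support_cons] at hnd
          exact (List.nodup_cons.mp hnd).1 (SimpleGraph.Walk.end_mem_support q')
      · exact absurd hadj (G.irrefl)
    · exact absurd (q.fst_mem_support_of_mem_edges h) hP.2

/-- A path of length 1 from `a` to `b` is the single edge. -/
lemma aux_eq_of_length_one {a b : V} {P Q : G.Walk a b}
    (hP : P.length = 1) (hQ : Q.length = 1) : P = Q := by
  cases P with
  | nil => simp at hP
  | @cons _ c _ hadj q =>
    cases Q with
    | nil => simp at hQ
    | @cons _ d _ hadj' q' =>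
      simp only [SimpleGraph.Walk.length_cons, Nat.add_left_inj] at hP hQ
      have hq : q.length = 0 := by omega
      have hq' : q'.length = 0 := by omega
      have hc : c = b := SimpleGraph.Walk.eq_of_length_eq_zero hq
      have hd : d = b := SimpleGraph.Walk.eq_of_length_eq_zero hq'
      subst hc; subst hd
      rw [SimpleGraph.Walk.length_eq_zero_iff, SimpleGraph.Walk.nil_iff_eq_nil] at hq hq'
      subst hq; subst hq'
      rfl

/-- Membership in `dropLast` for an element distinct from the last element. -/
lemma aux_mem_dropLast {α : Type*} : ∀ {l : List α} {x c : α},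
    x ∈ l → l.getLast? = some c → x ≠ c → x ∈ l.dropLast
  | [], x, c, hx, _, _ => by simp at hx
  | [y], x, c, hx, hc, hxc => by
      simp only [List.mem_singleton] at hx
      simp only [List.getLast?_singleton, Option.some.injEq] at hc
      exact absurd (hx.trans hc) hxc
  | y :: z :: l, x, c, hx, hc, hxc => by
      rw [List.getLast?_cons_cons] at hc
      rw [List.dropLast_cons₂]
      rcases List.mem_cons.mp hx with rfl | hx'
      · exact List.mem_cons_self
      · exact List.mem_cons_of_mem _ (aux_mem_dropLast hx' hc hxc)

/-- A vertex of a path other than the two endpoints is an interior vertex. -/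
lemma aux_mem_interior {a b x : V} {P : G.Walk a b}
    (hx : x ∈ P.support) (hxa : x ≠ a) (hxb : x ≠ b) : x ∈ P.interior := by
  have h1 : P.support = a :: P.support.tail := P.support_eq_cons
  have hx' : x ∈ P.support.tail := by
    rw [h1, List.mem_cons] at hx
    tauto
  have hne : P.support.tail ≠ [] := List.ne_nil_of_mem hx'
  have hlast : P.support.tail.getLast? = some b := by
    have h2 : P.support.getLast? = some b := by
      rw [List.getLast?_eq_getLast_of_ne_nil (by simp), P.getLast_support]
    obtain ⟨y, ys, hys⟩ := List.exists_cons_of_ne_nil hne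
    rw [h1, hys, List.getLast?_cons_cons] at h2
    rw [hys]
    exact h2
  exact aux_mem_dropLast hx' hlast hxb

/-- Two internally-disjoint paths meet only at their endpoints. -/
lemma aux_mem_ends {a b x : V} {P Q : G.Walk a b}
    (hdisj : ∀ y ∈ P.interior, y ∉ Q.interior)
    (hx : x ∈ P.support) (hx' : x ∈ Q.support) : x = a ∨ x = b := by
  by_contra h
  push_neg at h
  exact hdisj x (aux_mem_interior hx h.1 h.2) (aux_mem_interior hx' h.1 h.2)

/-- Two distinct internally-disjoint paths between `a ≠ b` form a cycle. -/
lemma aux_isCycle_append_reverse {a b : V} {P Q : G.Walk a b} (hab : a ≠ b)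
    (hP : P.IsPath) (hQ : Q.IsPath) (hne : P ≠ Q)
    (hint : ∀ x, x ∈ P.support → x ∈ Q.support → x = a ∨ x = b) :
    (P.append Q.reverse).IsCycle := by
  have hedis : ∀ e, e ∈ P.edges → e ∈ Q.edges → False := by
    intro e heP heQ
    induction e with
    | h x y =>
      have hadj : G.Adj x y := P.adj_of_mem_edges heP
      have hxP := P.fst_mem_support_of_mem_edges heP
      have hyP := P.snd_mem_support_of_mem_edges heP
      have hxQ := Q.fst_mem_support_of_mem_edges heQ
      have hyQ := Q.snd_mem_support_of_mem_edges heQ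
      have hx := hint x hxP hxQ
      have hy := hint y hyP hyQ
      have hxy : x ≠ y := hadj.ne
      have hab' : s(x, y) = s(a, b) := by
        rcases hx with rfl | rfl <;> rcases hy with rfl | rfl
        · exact absurd rfl hxy
        · rfl
        · exact Sym2.eq_swap
        · exact absurd rfl hxy
      rw [hab'] at heP heQ
      exact hne (aux_eq_of_length_one (aux_length_one_of_edge_mem hP heP)
        (aux_length_one_of_edge_mem hQ heQ))
  refine ⟨⟨⟨?_⟩, ?_⟩, ?_⟩
  · rw [SimpleGraph.Walk.edges_append, SimpleGraph.Walk.edges_reverse]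
    refine List.Nodup.append hP.edges_nodup ((List.nodup_reverse.mpr hQ.edges_nodup)) ?_
    intro e heP heQ
    exact hedis e heP (List.mem_reverse.mp heQ)
  · intro hnil
    apply hab
    have hlen : (P.append Q.reverse).length = 0 := by rw [hnil]; rfl
    rw [SimpleGraph.Walk.length_append] at hlen
    exact SimpleGraph.Walk.eq_of_length_eq_zero (Nat.eq_zero_of_add_eq_zero_right hlen)
  · rw [SimpleGraph.Walk.tail_support_append]
    refine List.Nodup.append ?_ ?_ ?_
    · have := hP.support_nodup
      rw [P.support_eq_cons] at this
      exact (List.nodup_cons.mp this).2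
    · have := hQ.reverse.support_nodup
      rw [Q.reverse.support_eq_cons] at this
      exact (List.nodup_cons.mp this).2
    · intro x hx1 hx2
      have hxa : x ≠ a := by
        have := hP.support_nodup
        rw [P.support_eq_cons, List.nodup_cons] at this
        rintro rfl; exact this.1 hx1
      have hxb : x ≠ b := by
        have := hQ.reverse.support_nodup
        rw [Q.reverse.support_eq_cons, List.nodup_cons] at this
        rintro rfl; exact this.1 hx2
      have hxP : x ∈ P.support := List.mem_of_mem_tail hx1
      have hxQ : x ∈ Q.support := by
        have : x ∈ Q.reverse.support := List.mem_of_mem_tail hx2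
        rwa [SimpleGraph.Walk.support_reverse, List.mem_reverse] at this
      rcases hint x hxP hxQ with rfl | rfl
      · exact hxa rfl
      · exact hxb rfl

/-- Every cycle has length at least the girth. -/
lemma aux_girth_le_length {a : V} {w : G.Walk a a} (hc : w.IsCycle) :
    G.girth ≤ w.length := by
  have h1 : G.egirth ≤ (w.length : ℕ∞) := le_egirth.mp le_rfl a w hc
  have h2 := ENat.toNat_le_toNat h1 (by simp)
  simpa [SimpleGraph.girth] using h2

end Aux

/-- in an induced theta subgraph of a graph in `H_ℓ` having an odd cycle, the ear
`P3` shared by the two odd cycles has length 1 or length greater than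
`max {ℓ, |P1|, |P2|}`, where `P1, P2` are the ears shared by cycles of different parity. -/
theorem theta_some_cycle_odd {V : Type*} [Fintype V] (G : SimpleGraph V)
    (ℓ : ℕ) (hℓ : 2 ≤ ℓ) (hG : G.InFamilyH ℓ)
    {a b : V} (P1 P2 P3 : G.Walk a b) (hTheta : G.IsInducedTheta P1 P2 P3)
    (h13 : Odd (P1.length + P3.length))
    (h23 : Odd (P2.length + P3.length)) :
    P3.length = 1 ∨ P3.length > max ℓ (max P1.length P2.length) := by
  by_cases hP3 : P3.length = 1
  · exact Or.inl hP3
  right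
  obtain ⟨hab, hp1, hp2, hp3, h12, h13', h23', hI12, hI13, hI23, hind⟩ := hTheta
  have hS12 : ∀ x, x ∈ P1.support → x ∈ P2.support → x = a ∨ x = b :=
    fun x hx hx' => aux_mem_ends hI12 hx hx'
  have hS13 : ∀ x, x ∈ P1.support → x ∈ P3.support → x = a ∨ x = b :=
    fun x hx hx' => aux_mem_ends hI13 hx hx'
  have hS23 : ∀ x, x ∈ P2.support → x ∈ P3.support → x = a ∨ x = b :=
    fun x hx hx' => aux_mem_ends hI23 hx hx'
  have hC12 : (P1.append P2.reverse).IsCycle :=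
    aux_isCycle_append_reverse hab hp1 hp2 h12 hS12
  have hC13 : (P1.append P3.reverse).IsCycle :=
    aux_isCycle_append_reverse hab hp1 hp3 h13' hS13
  have hC23 : (P2.append P3.reverse).IsCycle :=
    aux_isCycle_append_reverse hab hp2 hp3 h23' hS23
  -- girth lower bounds
  have g12 : 2 * ℓ ≤ P1.length + P2.length := by
    have := aux_girth_le_length hC12
    rwa [hG.1, Walk.length_append, Walk.length_reverse] at this
  have g13 : 2 * ℓ ≤ P1.length + P3.length := by
    have := aux_girth_le_length hC13
    rwa [hG.1, Walk.length_append, Walk.length_reverse] at this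
  have g23 : 2 * ℓ ≤ P2.length + P3.length := by
    have := aux_girth_le_length hC23
    rwa [hG.1, Walk.length_append, Walk.length_reverse] at this
  -- the cycle `P1 ++ P2.reverse` is an even hole, hence of length at most `2ℓ`
  have hmemS : ∀ x, x ∈ (P1.append P2.reverse).support →
      x ∈ P1.support ∨ x ∈ P2.support := by
    intro x hx
    rw [Walk.mem_support_append_iff] at hx
    rcases hx with hx | hx
    · exact Or.inl hx
    · right; rwa [Walk.support_reverse, List.mem_reverse] at hx
  have hhole : G.IsHole (P1.append P2.reverse) := by
    refine ⟨hC12, by rw [Walk.length_append, Walk.length_reverse]; omega, ?_⟩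
    intro x hx y hy hadj
    have hx' := hmemS x hx
    have hy' := hmemS y hy
    have := hind x (by tauto) y (by tauto) hadj
    rw [Walk.edges_append, Walk.edges_reverse, List.mem_append, List.mem_reverse]
    rcases this with h | h | h
    · exact Or.inl h
    · exact Or.inr h
    · exfalso
      have hxs : x ∈ P3.support := P3.fst_mem_support_of_mem_edges h
      have hys : y ∈ P3.support := P3.snd_mem_support_of_mem_edges h
      have hxab : x = a ∨ x = b := by
        rcases hx' with hx' | hx'
        · exact hS13 x hx' hxs
        · exact hS23 x hx' hxs
      have hyab : y = a ∨ y = b := by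
        rcases hy' with hy' | hy'
        · exact hS13 y hy' hys
        · exact hS23 y hy' hys
      have hxy : x ≠ y := hadj.ne
      have heq : s(x, y) = s(a, b) := by
        rcases hxab with rfl | rfl <;> rcases hyab with rfl | rfl
        · exact absurd rfl hxy
        · rfl
        · exact Sym2.eq_swap
        · exact absurd rfl hxy
      rw [heq] at h
      exact hP3 (aux_length_one_of_edge_mem hp3 h)
  have heven : Even (P1.append P2.reverse).length := by
    rw [Walk.length_append, Walk.length_reverse, Nat.even_iff]
    rw [Nat.odd_iff] at h13 h23
    omega
  have hle := hG.2 a (P1.append P2.reverse) hhole heven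
  rw [Walk.length_append, Walk.length_reverse] at hle
  rw [Nat.odd_iff] at h13 h23
  omega
end

section
/- Let ℓ ≥ 2 be an integer, let C be an even hole of a graph G ∈ H_ℓ, let P be a short (s,t)-jump over C, and let Q1, Q2 be the two internally disjoint (s,t)-paths of C. If P is of type-o, then |P| > ℓ. If P is of type-e, then |P| = |Q1| = |Q2| = ℓ. -/
open SimpleGraph

variable {V : Type*}

namespace MyAux

open SimpleGraph SimpleGraph.Walk

variable {V : Type*} {G : SimpleGraph V}


lemma countP_edges_eq [DecidableEq V] {u v : V} (p : G.Walk u v) (x : V) :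
    p.edges.countP (fun e => decide (x ∈ e)) =
      p.support.dropLast.count x + p.support.tail.count x := by
  induction p with
  | nil => simp
  | cons h q ih =>
    rename_i a b c
    rw [edges_cons, support_cons, List.countP_cons, ih,
      List.dropLast_cons_of_ne_nil q.support_ne_nil, List.tail_cons]
    have e1 : q.support.count x = q.support.tail.count x + (if x = b then 1 else 0) := by
      conv_lhs => rw [q.support_eq_cons, List.count_cons]
      by_cases hxb : x = b
      · subst hxb; simp
      · simp [hxb, Ne.symm hxb]
    have e2 : (a :: q.support.dropLast).count x
        = q.support.dropLast.count x + (if x = a then 1 else 0) := by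
      by_cases hxa : x = a
      · simp [List.count_cons, hxa]
      · simp [List.count_cons, hxa, Ne.symm hxa]
    have e3 : (if decide (x ∈ s(a, b)) = true then 1 else 0)
        = (if x = a then 1 else 0) + (if x = b then 1 else 0) := by
      by_cases hxa : x = a <;> by_cases hxb : x = b
      · exact absurd (hxa ▸ hxb) h.ne
      · simp [Sym2.mem_iff, hxa, hxb]; exact h.ne
      · simp [Sym2.mem_iff, hxa, hxb]; exact h.ne.symm
      · simp [Sym2.mem_iff, hxa, hxb]
    rw [e2, e3]
    have e4 : (a :: q.support).tail.count x = q.support.count x := rfl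
    omega

lemma cycle_countP_edges_le_two [DecidableEq V] {v : V} {C : G.Walk v v}
    (hC : C.IsCycle) (x : V) : C.edges.countP (fun e => decide (x ∈ e)) ≤ 2 := by
  rw [countP_edges_eq]
  have htail : C.support.tail.Nodup := hC.support_nodup
  have h1 : C.support.tail.count x ≤ 1 := List.nodup_iff_count_le_one.mp htail x
  have hne : C.support.tail ≠ [] := by
    intro h
    have h3 := hC.three_le_length
    have hl : C.support.tail.length = C.length := by
      rw [List.length_tail, C.length_support]; omega
    rw [h] at hl
    simp at hl
    omega
  have hget : C.support.tail.getLast hne = v := by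
    rw [List.getLast_tail]
    exact C.getLast_support
  have h2 : C.support.dropLast.count x ≤ 1 := by
    rw [C.support_eq_cons, List.dropLast_cons_of_ne_nil hne]
    by_cases hxv : x = v
    · subst hxv
      have hmem : x ∉ C.support.tail.dropLast := by
        intro hmem
        have hl : C.support.tail.dropLast ++ [x] = C.support.tail := by
          have h5 := List.dropLast_append_getLast hne
          rw [hget] at h5; exact h5
        have hnd : (C.support.tail.dropLast ++ [x]).Nodup := by rw [hl]; exact htail
        rw [List.nodup_append] at hnd
        exact hnd.2.2 x hmem x (by simp) rfl
      simp [List.count_cons, List.count_eq_zero_of_not_mem hmem]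
    · have hsub : C.support.tail.dropLast.count x ≤ C.support.tail.count x :=
        (List.dropLast_sublist _).count_le x
      rw [List.count_cons]
      simp [hxv, Ne.symm hxv]
      omega
  omega


lemma support_eq_interior {u v : V} (p : G.Walk u v) (h0 : p.length ≠ 0) :
    p.support = u :: (p.interior ++ [v]) := by
  cases p with
  | nil => simp at h0
  | cons h q =>
    show _ :: q.support = _
    rw [Walk.interior, support_cons, List.tail_cons]
    congr 1
    conv_lhs => rw [← List.dropLast_append_getLast q.support_ne_nil]
    rw [q.getLast_support]

lemma interior_subset_support {u v : V} (p : G.Walk u v) {x : V}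
    (hx : x ∈ p.interior) : x ∈ p.support :=
  List.mem_of_mem_tail (List.mem_of_mem_dropLast hx)

lemma mem_interior_iff {u v : V} {p : G.Walk u v} (hp : p.IsPath) (huv : u ≠ v) (x : V) :
    x ∈ p.interior ↔ x ∈ p.support ∧ x ≠ u ∧ x ≠ v := by
  have h0 : p.length ≠ 0 := fun h => huv (p.eq_of_length_eq_zero h)
  have hs := support_eq_interior p h0
  have hnd : p.support.Nodup := hp.support_nodup
  rw [hs] at hnd
  rw [List.nodup_cons, List.nodup_append] at hnd
  constructor
  · intro hx
    refine ⟨by rw [hs]; simp [hx], ?_, ?_⟩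
    · intro h; subst h; exact hnd.1 (by simp [hx])
    · intro h; subst h; exact hnd.2.2.2 x hx x (by simp) rfl
  · intro ⟨hsup, hxu, hxv⟩
    rw [hs] at hsup
    simp only [List.mem_cons, List.mem_append, List.not_mem_nil, or_false] at hsup
    rcases hsup with h | h | h
    · exact absurd h hxu
    · exact h
    · exact absurd h hxv

lemma start_not_mem_interior {u v : V} {p : G.Walk u v} (hp : p.IsPath) (huv : u ≠ v) :
    u ∉ p.interior := fun h => ((mem_interior_iff hp huv u).mp h).2.1 rfl

lemma end_not_mem_interior {u v : V} {p : G.Walk u v} (hp : p.IsPath) (huv : u ≠ v) :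
    v ∉ p.interior := fun h => (((mem_interior_iff hp huv v).mp h).2.2) rfl

lemma two_le_countP_edges [DecidableEq V] {u v : V} (p : G.Walk u v) {x : V}
    (hx : x ∈ p.interior) : 2 ≤ p.edges.countP (fun e => decide (x ∈ e)) := by
  rw [countP_edges_eq]
  have hxt : x ∈ p.support.tail := List.mem_of_mem_dropLast hx
  have hne : p.support.tail ≠ [] := List.ne_nil_of_mem hxt
  have h1 : 1 ≤ p.support.tail.count x := List.count_pos_iff.mpr hxt
  have h2 : 1 ≤ p.support.dropLast.count x := by
    apply List.count_pos_iff.mpr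
    rw [p.support_eq_cons, List.dropLast_cons_of_ne_nil hne]
    exact List.mem_cons_of_mem _ hx
  omega

lemma exists_two_edges [DecidableEq V] {u v : V} {p : G.Walk u v} (hp : p.IsPath) {x : V}
    (hx : x ∈ p.interior) :
    ∃ e f, e ≠ f ∧ e ∈ p.edges ∧ f ∈ p.edges ∧ x ∈ e ∧ x ∈ f := by
  have h2 := two_le_countP_edges p hx
  rw [List.countP_eq_length_filter] at h2
  set l := p.edges.filter (fun e => decide (x ∈ e)) with hl
  have hnd : l.Nodup := hp.isTrail.edges_nodup.filter _
  match l, hl, h2, hnd with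
  | e :: f :: r, hl, _, hnd =>
    have he : e ∈ p.edges.filter (fun e => decide (x ∈ e)) := by rw [← hl]; simp
    have hf : f ∈ p.edges.filter (fun e => decide (x ∈ e)) := by rw [← hl]; simp
    rw [List.mem_filter] at he hf
    refine ⟨e, f, ?_, he.1, hf.1, by simpa using he.2, by simpa using hf.2⟩
    intro hef
    rw [List.nodup_cons] at hnd
    exact hnd.1 (hef ▸ List.mem_cons_self)

lemma exists_edge_of_mem_support {u v x : V} (p : G.Walk u v) (h0 : p.length ≠ 0)
    (hx : x ∈ p.support) : ∃ e ∈ p.edges, x ∈ e := by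
  induction p with
  | nil => simp at h0
  | cons h q ih =>
    rename_i a b c
    rw [support_cons, List.mem_cons] at hx
    rcases hx with rfl | hx
    · exact ⟨s(x, b), by simp, by simp⟩
    · by_cases hq : q.length = 0
      · have hbc : b = c := q.eq_of_length_eq_zero hq
        have : q.support = [b] := by
          rw [q.support_eq_cons]
          have : q.support.tail.length = 0 := by rw [List.length_tail, q.length_support]; omega
          simp [List.length_eq_zero_iff.mp this]
        rw [this] at hx
        simp only [List.mem_singleton] at hx
        subst hx
        exact ⟨s(a, x), by simp, by simp⟩
      · obtain ⟨e, he, hxe⟩ := ih hq hx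
        exact ⟨e, by simp [he], hxe⟩

lemma jump_arc_cycle {v s t : V} {C : G.Walk v v} {P Q : G.Walk s t}
    (hChole : G.IsHole C) (hPj : G.IsShortJump C P) (hQ : Q.IsPath)
    (hQC : ∀ e ∈ Q.edges, e ∈ C.edges)
    (hQind : ∀ x ∈ Q.support, ∀ y ∈ Q.support, G.Adj x y → s(x, y) ∈ Q.edges)
    (hst : s ≠ t) :
    (P.append Q.reverse).IsCycle ∧
      ∀ x ∈ (P.append Q.reverse).support, ∀ y ∈ (P.append Q.reverse).support,
        G.Adj x y → s(x, y) ∈ (P.append Q.reverse).edges := by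
  obtain ⟨⟨hPpath, hPind, hsC, htC, hPintC⟩, hnadj, hshort⟩ := hPj
  have hP0 : P.length ≠ 0 := fun h => hst (P.eq_of_length_eq_zero h)
  have hQ0 : Q.length ≠ 0 := fun h => hst (Q.eq_of_length_eq_zero h)
  have hQsupC : ∀ x ∈ Q.support, x ∈ C.support := by
    intro x hx
    obtain ⟨e, he, hxe⟩ := exists_edge_of_mem_support Q hQ0 hx
    obtain ⟨y, rfl⟩ := Sym2.mem_iff_exists.mp hxe
    exact C.fst_mem_support_of_mem_edges (hQC _ he)
  have hend : ∀ (a b : V), s(a, b) ∈ P.edges → a ∉ P.interior → b ∉ P.interior → False := by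
    intro a b he ha hb
    have hadj := P.adj_of_mem_edges he
    have haS : a ∈ P.support := P.fst_mem_support_of_mem_edges he
    have hbS : b ∈ P.support := P.snd_mem_support_of_mem_edges he
    have ha' : a = s ∨ a = t := by
      by_contra hcon; push_neg at hcon
      exact ha ((mem_interior_iff hPpath hst a).mpr ⟨haS, hcon.1, hcon.2⟩)
    have hb' : b = s ∨ b = t := by
      by_contra hcon; push_neg at hcon
      exact hb ((mem_interior_iff hPpath hst b).mpr ⟨hbS, hcon.1, hcon.2⟩)
    rcases ha' with rfl | rfl <;> rcases hb' with rfl | rfl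
    · exact hadj.ne rfl
    · exact hnadj hadj
    · exact hnadj hadj.symm
    · exact hadj.ne rfl
  have hdisjPQ : ∀ e ∈ P.edges, e ∉ Q.edges := by
    intro e he hf
    obtain ⟨⟨a, b⟩, rfl⟩ := e.exists_rep
    by_cases ha : a ∈ P.interior
    · exact hPintC a ha (C.fst_mem_support_of_mem_edges (hQC _ hf))
    · by_cases hb : b ∈ P.interior
      · exact hPintC b hb (C.snd_mem_support_of_mem_edges (hQC _ hf))
      · exact hend a b he ha hb
  have hWtrail : (P.append Q.reverse).IsTrail := by
    rw [isTrail_def, edges_append, edges_reverse, List.nodup_append]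
    refine ⟨hPpath.isTrail.edges_nodup, List.nodup_reverse.mpr hQ.isTrail.edges_nodup, ?_⟩
    intro e he f hf hef
    rw [List.mem_reverse] at hf
    exact hdisjPQ e he (by rw [hef]; exact hf)
  have hPsup : P.support = s :: (P.interior ++ [t]) := support_eq_interior P hP0
  have hQRsup : Q.reverse.support = t :: (Q.reverse.interior ++ [s]) :=
    support_eq_interior Q.reverse (by rw [length_reverse]; exact hQ0)
  have hQRint : ∀ x, x ∈ Q.reverse.interior ↔ (x ∈ Q.support ∧ x ≠ s ∧ x ≠ t) := by
    intro x
    rw [mem_interior_iff hQ.reverse hst.symm, support_reverse, List.mem_reverse]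
    tauto
  have hPtail : P.support.tail = P.interior ++ [t] := by rw [hPsup]; rfl
  have hQRtail : Q.reverse.support.tail = Q.reverse.interior ++ [s] := by rw [hQRsup]; rfl
  have htailnd : (P.append Q.reverse).support.tail.Nodup := by
    rw [tail_support_append, List.nodup_append]
    refine ⟨(List.tail_sublist _).nodup hPpath.support_nodup,
      (List.tail_sublist _).nodup hQ.reverse.support_nodup, ?_⟩
    intro x hxP y hxQ hxy
    subst hxy
    rw [hPtail, List.mem_append] at hxP
    rw [hQRtail, List.mem_append] at hxQ
    have h1 : x ∈ P.interior ∨ x = t := by simpa using hxP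
    have h2 : x ∈ Q.reverse.interior ∨ x = s := by simpa using hxQ
    rcases h1 with h1 | rfl
    · rcases h2 with h2 | rfl
      · exact hPintC x h1 (hQsupC x ((hQRint x).mp h2).1)
      · exact start_not_mem_interior hPpath hst h1
    · rcases h2 with h2 | h2
      · exact (((hQRint _).mp h2).2.2) rfl
      · exact hst h2.symm
  have hWne : P.append Q.reverse ≠ Walk.nil := by
    intro h
    have hlen := congrArg Walk.length h
    rw [length_append, length_reverse, length_nil] at hlen
    omega
  refine ⟨⟨⟨hWtrail, hWne⟩, htailnd⟩, ?_⟩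
  have hWsupp : ∀ x, x ∈ (P.append Q.reverse).support ↔ (x ∈ P.support ∨ x ∈ Q.support) := by
    intro x
    rw [mem_support_append_iff, support_reverse, List.mem_reverse]
  have hWedges : ∀ e, e ∈ (P.append Q.reverse).edges ↔ (e ∈ P.edges ∨ e ∈ Q.edges) := by
    intro e
    rw [edges_append, List.mem_append, edges_reverse, List.mem_reverse]
  intro x hx y hy hadj
  rw [hWsupp] at hx
  rw [hWsupp] at hy
  rw [hWedges]
  by_cases hxQ : x ∈ Q.support
  · by_cases hyQ : y ∈ Q.support
    · exact Or.inr (hQind x hxQ y hyQ hadj)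
    · have hyP : y ∈ P.support := hy.resolve_right hyQ
      by_cases hxP : x ∈ P.support
      · exact Or.inl (hPind x hxP y hyP hadj)
      · have hxs : x ≠ s := fun h => hxP (h ▸ P.start_mem_support)
        have hxt : x ≠ t := fun h => hxP (h ▸ P.end_mem_support)
        have hys : y ≠ s := fun h => hyQ (h ▸ Q.start_mem_support)
        have hyt : y ≠ t := fun h => hyQ (h ▸ Q.end_mem_support)
        have hyint : y ∈ P.interior := (mem_interior_iff hPpath hst y).mpr ⟨hyP, hys, hyt⟩
        exact absurd hadj (hshort x (hQsupC x hxQ) hxs hxt y hyint)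
  · have hxP : x ∈ P.support := hx.resolve_right hxQ
    by_cases hyQ : y ∈ Q.support
    · by_cases hyP : y ∈ P.support
      · exact Or.inl (hPind x hxP y hyP hadj)
      · have hys : y ≠ s := fun h => hyP (h ▸ P.start_mem_support)
        have hyt : y ≠ t := fun h => hyP (h ▸ P.end_mem_support)
        have hxs : x ≠ s := fun h => hxQ (h ▸ Q.start_mem_support)
        have hxt : x ≠ t := fun h => hxQ (h ▸ Q.end_mem_support)
        have hxint : x ∈ P.interior := (mem_interior_iff hPpath hst x).mpr ⟨hxP, hxs, hxt⟩
        exact absurd hadj.symm (hshort y (hQsupC y hyQ) hys hyt x hxint)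
    · have hyP : y ∈ P.support := hy.resolve_right hyQ
      exact Or.inl (hPind x hxP y hyP hadj)


end MyAux


/-- for a short `(s,t)`-jump `P` over an even hole `C` of a graph in `H_ℓ`, with
`Q1, Q2` the two internally disjoint `(s,t)`-paths of `C`: if `P` is of type-o then `|P| > ℓ`,
and if `P` is of type-e then `|P| = |Q1| = |Q2| = ℓ`. -/
theorem short_jump_type_lengths {V : Type*} [Fintype V] (G : SimpleGraph V)
    (ℓ : ℕ) (hℓ : 2 ≤ ℓ) (hG : G.InFamilyH ℓ)
    {v s t : V} (C : G.Walk v v) (hC : G.IsEvenHole C)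
    (P : G.Walk s t) (hP : G.IsShortJump C P)
    (Q1 Q2 : G.Walk s t) (hQ1 : Q1.IsPath) (hQ2 : Q2.IsPath)
    (hcover : ∀ e : Sym2 V, e ∈ C.edges ↔ (e ∈ Q1.edges ∨ e ∈ Q2.edges))
    (hdisj : ∀ e : Sym2 V, e ∈ Q1.edges → e ∉ Q2.edges) :
    (Odd (P.length + Q1.length) → P.length > ℓ) ∧
    (Even (P.length + Q1.length) →
      (P.length = ℓ ∧ Q1.length = ℓ ∧ Q2.length = ℓ)) := by
  classical
  have hCcyc : C.IsCycle := hC.1.1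
  have hC4 : 4 ≤ C.length := hC.1.2.1
  have hCind : ∀ x ∈ C.support, ∀ y ∈ C.support, G.Adj x y → s(x, y) ∈ C.edges := hC.1.2.2
  have hCeven : Even C.length := hC.2
  have hnadj : ¬ G.Adj s t := hP.2.1
  -- s ≠ t
  have hst : s ≠ t := by
    rintro rfl
    have h1 : Q1 = Walk.nil := Walk.isPath_iff_eq_nil.mp hQ1
    have h2 : Q2 = Walk.nil := Walk.isPath_iff_eq_nil.mp hQ2
    have hnil : C.edges = [] := by
      refine List.eq_nil_iff_forall_not_mem.mpr fun e he => ?_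
      rcases (hcover e).mp he with h | h
      · rw [h1] at h; simp at h
      · rw [h2] at h; simp at h
    have hlen := C.length_edges
    rw [hnil] at hlen
    simp at hlen
    omega
  -- girth facts
  have hg : G.girth = 2 * ℓ := hG.1
  have hnac : ¬ G.IsAcyclic := by
    intro h
    rw [h.girth_eq_zero] at hg
    omega
  have hcyc_ge : ∀ (a : V) (w : G.Walk a a), w.IsCycle → 2 * ℓ ≤ w.length := by
    intro a w hw
    have hegtop : G.egirth ≠ ⊤ := fun h => hnac (egirth_eq_top.mp h)
    have heg : G.egirth = ((2 * ℓ : ℕ) : ℕ∞) := by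
      rw [← hg, girth, ENat.coe_toNat hegtop]
    have hle : ((2 * ℓ : ℕ) : ℕ∞) ≤ (w.length : ℕ∞) := le_egirth.mp heg.ge a w hw
    exact_mod_cast hle
  have hQ1C : ∀ e ∈ Q1.edges, e ∈ C.edges := fun e he => (hcover e).mpr (Or.inl he)
  have hQ2C : ∀ e ∈ Q2.edges, e ∈ C.edges := fun e he => (hcover e).mpr (Or.inr he)
  -- length sum
  have hsum : Q1.length + Q2.length = C.length := by
    have h1 : C.edges.toFinset = Q1.edges.toFinset ∪ Q2.edges.toFinset := by
      ext e
      simp only [List.mem_toFinset, Finset.mem_union]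
      exact hcover e
    have hd : Disjoint Q1.edges.toFinset Q2.edges.toFinset := by
      rw [Finset.disjoint_left]
      intro e he hf
      rw [List.mem_toFinset] at he hf
      exact hdisj e he hf
    have hcard := congrArg Finset.card h1
    rw [Finset.card_union_of_disjoint hd,
      List.toFinset_card_of_nodup hCcyc.isCircuit.isTrail.edges_nodup,
      List.toFinset_card_of_nodup hQ1.isTrail.edges_nodup,
      List.toFinset_card_of_nodup hQ2.isTrail.edges_nodup,
      C.length_edges, Q1.length_edges, Q2.length_edges] at hcard
    omega
  -- interior disjointness of Q1, Q2
  have hIntDisj : ∀ x, x ∈ Q1.interior → x ∈ Q2.interior → False := by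
    intro x h1 h2
    obtain ⟨e1, e2, h12, he1, he2, hx1, hx2⟩ := MyAux.exists_two_edges hQ1 h1
    obtain ⟨f1, f2, hf12, hf1, hf2, hx3, hx4⟩ := MyAux.exists_two_edges hQ2 h2
    have hne1 : e1 ≠ f1 := fun h => hdisj e1 he1 (h ▸ hf1)
    have hne2 : e1 ≠ f2 := fun h => hdisj e1 he1 (h ▸ hf2)
    have hne3 : e2 ≠ f1 := fun h => hdisj e2 he2 (h ▸ hf1)
    have hne4 : e2 ≠ f2 := fun h => hdisj e2 he2 (h ▸ hf2)
    have hcount := MyAux.cycle_countP_edges_le_two hCcyc x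
    rw [List.countP_eq_length_filter] at hcount
    have hlnd : (C.edges.filter (fun e => decide (x ∈ e))).Nodup :=
      hCcyc.isCircuit.isTrail.edges_nodup.filter _
    have hsub : ({e1, e2, f1, f2} : Finset (Sym2 V)) ⊆
        (C.edges.filter (fun e => decide (x ∈ e))).toFinset := by
      intro g hg
      rw [List.mem_toFinset, List.mem_filter]
      simp only [Finset.mem_insert, Finset.mem_singleton] at hg
      rcases hg with rfl | rfl | rfl | rfl
      · exact ⟨hQ1C _ he1, by simpa using hx1⟩
      · exact ⟨hQ1C _ he2, by simpa using hx2⟩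
      · exact ⟨hQ2C _ hf1, by simpa using hx3⟩
      · exact ⟨hQ2C _ hf2, by simpa using hx4⟩
    have hc4 : ({e1, e2, f1, f2} : Finset (Sym2 V)).card = 4 := by
      rw [Finset.card_insert_of_notMem (by simp [h12, hne1, hne2]),
        Finset.card_insert_of_notMem (by simp [hne3, hne4]),
        Finset.card_insert_of_notMem (by simp [hf12]),
        Finset.card_singleton]
    have hfin := Finset.card_le_card hsub
    rw [hc4, List.toFinset_card_of_nodup hlnd] at hfin
    omega
  -- induced condition within each arc
  have key : ∀ (Qa Qb : G.Walk s t), Qa.IsPath → Qb.IsPath →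
      (∀ e ∈ Qa.edges, e ∈ C.edges) →
      (∀ e, e ∈ C.edges → e ∈ Qa.edges ∨ e ∈ Qb.edges) →
      (∀ x, x ∈ Qa.interior → x ∈ Qb.interior → False) →
      ∀ x ∈ Qa.support, ∀ y ∈ Qa.support, G.Adj x y → s(x, y) ∈ Qa.edges := by
    intro Qa Qb hpa hpb hca hcov hdis x hx y hy hadj
    have hQa0 : Qa.length ≠ 0 := fun h => hst (Qa.eq_of_length_eq_zero h)
    have hsupCa : ∀ z ∈ Qa.support, z ∈ C.support := by
      intro z hz
      obtain ⟨e, he, hze⟩ := MyAux.exists_edge_of_mem_support Qa hQa0 hz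
      obtain ⟨y', rfl⟩ := Sym2.mem_iff_exists.mp hze
      exact C.fst_mem_support_of_mem_edges (hca _ he)
    have heC : s(x, y) ∈ C.edges := hCind x (hsupCa x hx) y (hsupCa y hy) hadj
    rcases hcov _ heC with h | h
    · exact h
    · exfalso
      have hxb : x ∈ Qb.support := Qb.fst_mem_support_of_mem_edges h
      have hyb : y ∈ Qb.support := Qb.snd_mem_support_of_mem_edges h
      have hx' : x = s ∨ x = t := by
        by_contra hcon
        push_neg at hcon
        exact hdis x ((MyAux.mem_interior_iff hpa hst x).mpr ⟨hx, hcon.1, hcon.2⟩)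
          ((MyAux.mem_interior_iff hpb hst x).mpr ⟨hxb, hcon.1, hcon.2⟩)
      have hy' : y = s ∨ y = t := by
        by_contra hcon
        push_neg at hcon
        exact hdis y ((MyAux.mem_interior_iff hpa hst y).mpr ⟨hy, hcon.1, hcon.2⟩)
          ((MyAux.mem_interior_iff hpb hst y).mpr ⟨hyb, hcon.1, hcon.2⟩)
      rcases hx' with rfl | rfl <;> rcases hy' with rfl | rfl
      · exact hadj.ne rfl
      · exact hnadj hadj
      · exact hnadj hadj.symm
      · exact hadj.ne rfl
  have hQ1ind := key Q1 Q2 hQ1 hQ2 hQ1C (fun e he => (hcover e).mp he) hIntDisj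
  have hQ2ind := key Q2 Q1 hQ2 hQ1 hQ2C (fun e he => ((hcover e).mp he).symm)
    (fun x h2 h1 => hIntDisj x h1 h2)
  obtain ⟨hW1cyc, hW1ind⟩ := MyAux.jump_arc_cycle hC.1 hP hQ1 hQ1C hQ1ind hst
  obtain ⟨hW2cyc, hW2ind⟩ := MyAux.jump_arc_cycle hC.1 hP hQ2 hQ2C hQ2ind hst
  have hW1len : (P.append Q1.reverse).length = P.length + Q1.length := by
    rw [Walk.length_append, Walk.length_reverse]
  have hW2len : (P.append Q2.reverse).length = P.length + Q2.length := by
    rw [Walk.length_append, Walk.length_reverse]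
  have hge1 : 2 * ℓ ≤ P.length + Q1.length := by
    have h := hcyc_ge s _ hW1cyc
    rwa [hW1len] at h
  have hge2 : 2 * ℓ ≤ P.length + Q2.length := by
    have h := hcyc_ge s _ hW2cyc
    rwa [hW2len] at h
  have hCge : 2 * ℓ ≤ C.length := hcyc_ge v C hCcyc
  have hCle : C.length ≤ 2 * ℓ := hG.2 v C hC.1 hCeven
  have hCeq : C.length = 2 * ℓ := le_antisymm hCle hCge
  have hW1hole : G.IsHole (P.append Q1.reverse) := ⟨hW1cyc, by omega, hW1ind⟩
  have hW2hole : G.IsHole (P.append Q2.reverse) := ⟨hW2cyc, by omega, hW2ind⟩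
  constructor
  · intro hodd
    have ho1 : (P.length + Q1.length) % 2 = 1 := Nat.odd_iff.mp hodd
    omega
  · intro heven
    have he1 : (P.length + Q1.length) % 2 = 0 := Nat.even_iff.mp heven
    have he2 : (P.length + Q2.length) % 2 = 0 := by omega
    have hle1 : P.length + Q1.length ≤ 2 * ℓ := by
      have h := hG.2 s _ hW1hole (by rw [hW1len]; exact Nat.even_iff.mpr (by omega))
      rwa [hW1len] at h
    have hle2 : P.length + Q2.length ≤ 2 * ℓ := by
      have h := hG.2 s _ hW2hole (by rw [hW2len]; exact Nat.even_iff.mpr (by omega))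
      rwa [hW2len] at h
    omega
end
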